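/- Let R be a commutative ring, σ a ring automorphism of R, and δ a σ-derivation of R. Then δ extends to a σ̃-derivation δ̃ on the total ring of fractions Q(R) given by δ̃(a/s) = −(δ(s)/σ(s))·(a/s) + δ(a)/σ(s), where σ̃ is the automorphism of Q(R) induced by σ. -/

import Mathlib

section Aux

variable {R : Type*} [CommRing R]

theorem sigma_mem_nzd (σ : R ≃+* R) (s : R) (hs : s ∈ nonZeroDivisors R) :
    σ s ∈ nonZeroDivisors R := by
  rw [mem_nonZeroDivisors_iff_right] at hs ⊢
  intro x hx
  have h1 : σ (σ.symm x * s) = 0 := by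
    rw [map_mul, RingEquiv.apply_symm_apply, hx]
  have h2 : σ.symm x * s = 0 := by
    apply σ.injective; simpa using h1
  have h3 : σ.symm x = 0 := hs _ h2
  have : x = σ (σ.symm x) := (σ.apply_symm_apply x).symm
  rw [this, h3, map_zero]

theorem key_identity (σ : R ≃+* R) (δ : R → R)
    (hleib : ∀ r s : R, δ (r * s) = σ r * δ s + δ r * s)
    {a b s t : R} (h : t * a = s * b) :
    σ t * t * (s * δ a - a * δ s) = σ s * s * (t * δ b - b * δ t) := by
  have h2 : δ (t * a) = δ (s * b) := by rw [h]
  have h3 : δ (t * s) = δ (s * t) := by rw [mul_comm]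
  linear_combination (-(t*s)) * hleib t a + (t*a) * hleib t s + (t*s) * hleib s b
    - (s*b) * hleib s t + (t*s) * h2 - (t*a) * h3 - δ (s*t) * h

end Aux

/-- Let `R` be a commutative ring, `σ` a ring automorphism and `δ` a
`σ`-derivation of `R`. Then `δ` extends to a `σ̃`-derivation `D` on the total ring of
fractions `Q(R) = Localization (nonZeroDivisors R)`, given by
`D(a/s) = −(δ(s)/σ(s))·(a/s) + δ(a)/σ(s)`, where `σ̃ = τ` is the automorphism of `Q(R)`
induced by `σ` (so `τ(a/s) = σ(a)/σ(s)`). -/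
theorem sigma_derivation_extends_to_total_ring_of_fractions
    {R : Type*} [CommRing R] (σ : R ≃+* R) (δ : R → R)
    (hadd : ∀ r s : R, δ (r + s) = δ r + δ s)
    (hleib : ∀ r s : R, δ (r * s) = σ r * δ s + δ r * s) :
    ∃ (τ : Localization (nonZeroDivisors R) ≃+* Localization (nonZeroDivisors R))
      (D : Localization (nonZeroDivisors R) →+ Localization (nonZeroDivisors R)),
      (∀ (a : R) (s t : nonZeroDivisors R), (t : R) = σ s →
        τ (Localization.mk a s) = Localization.mk (σ a) t) ∧
      (∀ x y : Localization (nonZeroDivisors R), D (x * y) = τ x * D y + D x * y) ∧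
      (∀ (a : R) (s t : nonZeroDivisors R), (t : R) = σ s →
        D (Localization.mk a s) =
          -(Localization.mk (δ s) t * Localization.mk a s) + Localization.mk (δ a) t) := by
  classical
  -- σ maps the nonzerodivisors onto themselves
  have hmap : (nonZeroDivisors R).map σ.toMonoidHom = nonZeroDivisors R := by
    ext x
    simp only [Submonoid.mem_map]
    constructor
    · rintro ⟨y, hy, rfl⟩; exact sigma_mem_nzd σ y hy
    · intro hx; exact ⟨σ.symm x, sigma_mem_nzd σ.symm x hx, σ.apply_symm_apply x⟩
  -- the induced automorphism τ of Q(R)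
  set Q := Localization (nonZeroDivisors R)
  let τ : Q ≃+* Q := IsLocalization.ringEquivOfRingEquiv Q Q σ hmap
  have hτmk : ∀ (a : R) (s : nonZeroDivisors R),
      τ (Localization.mk a s) =
        Localization.mk (σ a) ⟨σ s, sigma_mem_nzd σ s s.2⟩ := by
    intro a s
    rw [Localization.mk_eq_mk']
    exact IsLocalization.ringEquivOfRingEquiv_mk' hmap a s
  -- the denominator for D
  have hden : ∀ s : nonZeroDivisors R, σ (s : R) * s ∈ nonZeroDivisors R :=
    fun s => mul_mem (sigma_mem_nzd σ s s.2) s.2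
  -- cancellation of nonzerodivisors
  have hcancel : ∀ (u : nonZeroDivisors R) (x y : R), (u : R) * x = u * y → x = y := by
    intro u x y h
    have hz : (x - y) * u = 0 := by linear_combination h
    exact sub_eq_zero.mp ((mul_right_mem_nonZeroDivisors_eq_zero_iff u.2).mp hz)
  -- the underlying function of D
  let D0 : Q → Q := fun x => Localization.liftOn x
    (fun a s => Localization.mk ((s : R) * δ a - a * δ s) ⟨σ s * s, hden s⟩)
    (by
      intro a c b d hr
      obtain ⟨u, hu⟩ := Localization.r_iff_exists.mp hr
      have hd : (d : R) * a = (b : R) * c := hcancel u _ _ hu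
      apply Localization.mk_eq_mk_iff.mpr
      apply Localization.r_iff_exists.mpr
      refine ⟨1, ?_⟩
      push_cast
      have := key_identity σ δ hleib hd
      linear_combination this)
  have hD0mk : ∀ (a : R) (s : nonZeroDivisors R),
      D0 (Localization.mk a s) =
        Localization.mk ((s : R) * δ a - a * δ s) ⟨σ s * s, hden s⟩ :=
    fun a s => Localization.liftOn_mk _ _ a s
  -- additivity of D0
  have hD0add : ∀ x y : Q, D0 (x + y) = D0 x + D0 y := by
    intro x y
    refine Localization.induction_on₂ x y ?_
    rintro ⟨a, s⟩ ⟨b, t⟩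
    rw [Localization.add_mk, hD0mk, hD0mk, hD0mk, Localization.add_mk]
    apply Localization.mk_eq_mk_iff.mpr
    apply Localization.r_iff_exists.mpr
    refine ⟨1, ?_⟩
    have hcomm : σ (t:R) * δ s + δ (t:R) * s = σ (s:R) * δ t + δ (s:R) * t := by
      have h1 := hleib (t:R) (s:R)
      have h2 := hleib (s:R) (t:R)
      have h3 : δ ((t:R) * s) = δ ((s:R) * t) := by rw [mul_comm]
      linear_combination -h1 + h2 + h3
    push_cast
    simp only [hadd, hleib, map_mul, map_add]
    linear_combination (σ (s:R) * (s:R) * σ (t:R) * (t:R)^2 * a) * hcomm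
  let D : Q →+ Q := AddMonoidHom.mk' D0 hD0add
  refine ⟨τ, D, ?_, ?_, ?_⟩
  · intro a s t ht
    rw [hτmk]
    congr 1
    exact Subtype.ext ht.symm
  · intro x y
    refine Localization.induction_on₂ x y ?_
    rintro ⟨a, s⟩ ⟨b, t⟩
    show D0 (Localization.mk a s * Localization.mk b t) =
      τ (Localization.mk a s) * D0 (Localization.mk b t)
        + D0 (Localization.mk a s) * Localization.mk b t
    rw [Localization.mk_mul, hD0mk, hτmk, hD0mk, hD0mk, Localization.mk_mul,
      Localization.mk_mul, Localization.add_mk]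
    apply Localization.mk_eq_mk_iff.mpr
    apply Localization.r_iff_exists.mpr
    refine ⟨1, ?_⟩
    have hcomm : σ (t:R) * δ s + δ (t:R) * s = σ (s:R) * δ t + δ (s:R) * t := by
      have h1 := hleib (t:R) (s:R)
      have h2 := hleib (s:R) (t:R)
      have h3 : δ ((t:R) * s) = δ ((s:R) * t) := by rw [mul_comm]
      linear_combination -h1 + h2 + h3
    have rel1 : σ (t:R) * δ a + δ (t:R) * a = σ a * δ t + δ a * (t:R) := by
      have h1 := hleib (t:R) a
      have h2 := hleib a (t:R)
      have h3 : δ ((t:R) * a) = δ (a * (t:R)) := by rw [mul_comm]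
      linear_combination -h1 + h2 + h3
    push_cast
    simp only [hadd, hleib, map_mul, map_add]
    linear_combination (-(σ (s:R)^2 * σ (t:R) * (t:R)^2 * (s:R)^2 * b)) * rel1
      + (σ (s:R)^2 * σ (t:R) * (t:R)^2 * (s:R) * b * a) * hcomm
  · intro a s t ht
    show D0 (Localization.mk a s) = _
    rw [hD0mk, Localization.mk_mul, Localization.neg_mk, Localization.add_mk]
    apply Localization.mk_eq_mk_iff.mpr
    apply Localization.r_iff_exists.mpr
    refine ⟨1, ?_⟩
    push_cast [ht]
    ring
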